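/- For even k and n ≥ k/2 + 1, the join of K_{k/2 − 1} with the disjoint union of a single edge K_2 and n − k/2 − 1 isolated vertices contains no linear forest with k edges, and its number of s-cliques equals C(k/2 + 1, s) + (n − k/2 − 1)·C(k/2 − 1, s−1). -/

import Mathlib

open SimpleGraph Finset

/-- `G` contains a linear forest with `k` edges: a subgraph that is acyclic
with maximum degree at most 2 and exactly `k` edges. -/
def containsLinearForest {V : Type*} (G : SimpleGraph V) (k : ℕ) : Prop :=
  ∃ H : SimpleGraph V, H ≤ G ∧ H.IsAcyclic ∧ (∀ v, (H.neighborSet v).ncard ≤ 2) ∧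
    H.edgeSet.ncard = k

/-- `G` contains a matching with `k` edges. -/
def containsMatching {V : Type*} (G : SimpleGraph V) (k : ℕ) : Prop :=
  ∃ H : SimpleGraph V, H ≤ G ∧ (∀ v, (H.neighborSet v).ncard ≤ 1) ∧ H.edgeSet.ncard = k

/-- Number of `s`-cliques (copies of `K_s`) in `G`. -/
noncomputable def cliqueCount {V : Type*} (G : SimpleGraph V) (s : ℕ) : ℕ :=
  {S : Finset V | G.IsNClique s S}.ncard

/-- Number of copies of `K*_{s,t}` in `G`: pairs `(W₁, W₂)` of disjoint vertex sets with
`|W₁| = s`, `|W₂| = t`, `W₁` a clique and all `W₁`–`W₂` edges present. -/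
noncomputable def kstCount {V : Type*} (G : SimpleGraph V) (s t : ℕ) : ℕ :=
  {p : Finset V × Finset V | p.1.card = s ∧ p.2.card = t ∧ Disjoint p.1 p.2 ∧
    G.IsClique (p.1 : Set V) ∧ ∀ a ∈ p.1, ∀ b ∈ p.2, G.Adj a b}.ncard

/-- The join `K_a ∨ (K_2 ∪ E_{n-a-2})`, realized on `Fin n`: the clique on the first `a`
vertices joined to everything, plus the extra edge between vertices `a` and `a+1`. -/
def joinGraphK2 (n a : ℕ) : SimpleGraph (Fin n) where
  Adj x y := x ≠ y ∧ ((x : ℕ) < a ∨ (y : ℕ) < a ∨ ((x : ℕ) < a + 2 ∧ (y : ℕ) < a + 2))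
  symm := ⟨by rintro x y ⟨h1, h2⟩; exact ⟨h1.symm, by tauto⟩⟩
  loopless := ⟨by rintro x ⟨h1, -⟩; exact h1 rfl⟩

lemma card_filter_lt_fin (n a : ℕ) (h : a ≤ n) :
    ((univ : Finset (Fin n)).filter (fun v : Fin n => (v : ℕ) < a)).card = a := by
  apply Finset.card_eq_of_bijective (fun i hi => ⟨i, lt_of_lt_of_le hi h⟩)
  · intro v hv
    simp only [mem_filter, mem_univ, true_and] at hv
    exact ⟨v, hv, rfl⟩
  · intro i hi
    simp [hi]
  · intro i j hi hj hij
    exact congrArg Fin.val hij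

lemma card_filter_ge_fin (n a : ℕ) (h : a ≤ n) :
    ((univ : Finset (Fin n)).filter (fun v : Fin n => a ≤ (v : ℕ))).card = n - a := by
  have := Finset.card_filter_add_card_filter_not
    (s := (univ : Finset (Fin n))) (p := fun v : Fin n => (v : ℕ) < a)
  simp only [not_lt, card_univ, Fintype.card_fin] at this
  have h2 := card_filter_lt_fin n a h
  omega

lemma clique_count_eq (n a s : ℕ) (hn : a + 2 ≤ n) (hs : 1 ≤ s) :
    cliqueCount (joinGraphK2 n a) s =
      Nat.choose (a + 2) s + (n - a - 2) * Nat.choose a (s - 1) := by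
  classical
  set G := joinGraphK2 n a with hG
  set T : Finset (Fin n) := univ.filter (fun v : Fin n => (v : ℕ) < a + 2) with hT
  set Cf : Finset (Fin n) := univ.filter (fun v : Fin n => (v : ℕ) < a) with hCf
  set R : Finset (Fin n) := univ.filter (fun v : Fin n => a + 2 ≤ (v : ℕ)) with hR
  set F : Finset (Finset (Fin n)) := univ.filter (fun S => G.IsNClique s S) with hF
  have hcount : cliqueCount G s = F.card := by
    rw [cliqueCount, ← Set.ncard_coe_finset]
    congr 1
    ext S
    simp [hF]
  rw [hcount]
  have hkey : F = T.powersetCard s ∪ R.biUnion (fun v => (Cf.powersetCard (s - 1)).image (insert v)) := by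
    ext S
    simp only [hF, mem_filter, mem_univ, true_and, mem_union, mem_powersetCard, mem_biUnion,
      mem_image]
    constructor
    · rintro ⟨hclique, hcard⟩
      by_cases hall : ∀ x ∈ S, (x : ℕ) < a + 2
      · left
        exact ⟨fun x hx => by simp [hT, hall x hx], hcard⟩
      · right
        push_neg at hall
        obtain ⟨v, hvS, hv⟩ := hall

        refine ⟨v, by simp [hR, hv], S.erase v, ⟨?_, ?_⟩, Finset.insert_erase hvS⟩
        · intro w hw
          have hwS := Finset.mem_of_mem_erase hw
          have hwv := Finset.ne_of_mem_erase hw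
          have hadj : G.Adj w v := hclique hwS hvS (by exact_mod_cast hwv)
          obtain ⟨-, hc⟩ := hadj
          simp only [hCf, mem_filter, mem_univ, true_and]
          omega
        · rw [Finset.card_erase_of_mem hvS, hcard]
    · rintro (⟨hsub, hcard⟩ | ⟨v, hvR, S', ⟨hsub, hcard⟩, rfl⟩)
      · refine ⟨?_, hcard⟩
        intro x hx y hy hxy
        have hx' : (x : ℕ) < a + 2 := by
          have := hsub hx; simp only [hT, mem_filter] at this; exact this.2
        have hy' : (y : ℕ) < a + 2 := by
          have := hsub hy; simp only [hT, mem_filter] at this; exact this.2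
        exact ⟨hxy, Or.inr (Or.inr ⟨hx', hy'⟩)⟩
      · have hvR' : a + 2 ≤ (v : ℕ) := by simp only [hR, mem_filter] at hvR; exact hvR.2
        have hsub' : ∀ w ∈ S', (w : ℕ) < a := by
          intro w hw
          have := hsub hw; simp only [hCf, mem_filter] at this; exact this.2
        have hvnot : v ∉ S' := fun h => by have := hsub' v h; omega
        constructor
        · intro x hx y hy hxy
          simp only [Finset.coe_insert, Set.mem_insert_iff, Finset.mem_coe] at hx hy
          refine ⟨hxy, ?_⟩
          rcases hx with rfl | hx
          · rcases hy with rfl | hy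
            · exact absurd rfl hxy
            · exact Or.inr (Or.inl (hsub' _ hy))
          · exact Or.inl (hsub' _ hx)
        · rw [Finset.card_insert_of_notMem hvnot, hcard]
          omega
  rw [hkey]
  have hdisj : Disjoint (T.powersetCard s)
      (R.biUnion (fun v => (Cf.powersetCard (s - 1)).image (insert v))) := by
    rw [Finset.disjoint_left]
    intro S hS hS'
    simp only [mem_powersetCard] at hS
    simp only [mem_biUnion, mem_image, mem_powersetCard] at hS'
    obtain ⟨v, hvR, S', ⟨hsub, hcard⟩, rfl⟩ := hS'
    have hvT := hS.1 (Finset.mem_insert_self v S')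
    simp only [hT, hR, mem_filter] at hvT hvR
    omega
  rw [Finset.card_union_of_disjoint hdisj, Finset.card_powersetCard,
    card_filter_lt_fin n (a + 2) hn]
  congr 1
  rw [Finset.card_biUnion]
  · have heach : ∀ v ∈ R, ((Cf.powersetCard (s - 1)).image (insert v)).card
        = Nat.choose a (s - 1) := by
      intro v hv
      have hvR' : a + 2 ≤ (v : ℕ) := by simp only [hR, mem_filter] at hv; exact hv.2
      rw [Finset.card_image_of_injOn, Finset.card_powersetCard,
        card_filter_lt_fin n a (by omega)]
      intro S1 h1 S2 h2 he
      simp only [mem_coe, mem_powersetCard] at h1 h2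
      have hv1 : v ∉ S1 := fun h => by
        have := h1.1 h; simp only [hCf, mem_filter] at this; omega
      have hv2 : v ∉ S2 := fun h => by
        have := h2.1 h; simp only [hCf, mem_filter] at this; omega
      have := congrArg (Finset.erase · v) he
      simpa [Finset.erase_insert hv1, Finset.erase_insert hv2] using this
    rw [Finset.sum_congr rfl heach, Finset.sum_const, smul_eq_mul,
      card_filter_ge_fin n (a + 2) hn]
    rw [Nat.sub_sub]
  · intro v hv w hw hvw
    rw [Function.onFun, Finset.disjoint_left]
    intro S hSv hSw
    simp only [mem_image, mem_powersetCard] at hSv hSw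
    obtain ⟨S1, ⟨hs1, -⟩, rfl⟩ := hSv
    obtain ⟨S2, ⟨hs2, -⟩, he⟩ := hSw
    have hwmem : w ∈ insert v S1 := he ▸ Finset.mem_insert_self w S2
    rcases Finset.mem_insert.1 hwmem with h | h
    · exact hvw h.symm
    · have := hs1 h
      simp only [hCf, mem_filter] at this
      simp only [mem_coe, hR, mem_filter] at hw
      omega

lemma edge_bound (n a : ℕ) (hn : a + 2 ≤ n) (H : SimpleGraph (Fin n))
    (hH : H ≤ joinGraphK2 n a) (hdeg : ∀ v, (H.neighborSet v).ncard ≤ 2) :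
    H.edgeSet.ncard ≤ 2 * a + 1 := by
  classical
  have hdeg' : ∀ v, H.degree v ≤ 2 := by
    intro v
    have := hdeg v
    rwa [Set.ncard_eq_toFinset_card' ] at this
  set va : Fin n := ⟨a, by omega⟩
  set va1 : Fin n := ⟨a + 1, by omega⟩
  set Cfin : Finset (Fin n) := univ.filter (fun v => (v : ℕ) < a) with hC
  have hsub : H.edgeFinset ⊆ insert s(va, va1) (Cfin.biUnion (fun v => H.incidenceFinset v)) := by
    intro e he
    rw [mem_edgeFinset] at he
    induction e with
    | h x y =>
      have hadj : H.Adj x y := he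
      have hG := hH hadj
      obtain ⟨hne, hcase⟩ := hG
      by_cases hx : (x : ℕ) < a
      · refine mem_insert_of_mem (mem_biUnion.2 ⟨x, ?_, ?_⟩)
        · simp [hC, hx]
        · rw [mem_incidenceFinset]
          exact ⟨he, Sym2.mem_mk_left x y⟩
      · by_cases hy : (y : ℕ) < a
        · refine mem_insert_of_mem (mem_biUnion.2 ⟨y, ?_, ?_⟩)
          · simp [hC, hy]
          · rw [mem_incidenceFinset]
            exact ⟨he, Sym2.mem_mk_right x y⟩
        · have hxy : (x : ℕ) < a + 2 ∧ (y : ℕ) < a + 2 := by tauto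
          have hxn : (x : ℕ) ≠ (y : ℕ) := fun h => hne (Fin.ext h)
          have : ((x:ℕ) = a ∧ (y:ℕ) = a + 1) ∨ ((x:ℕ) = a+1 ∧ (y:ℕ) = a) := by omega
          have hee : s(x, y) = s(va, va1) := by
            rcases this with ⟨h1, h2⟩ | ⟨h1, h2⟩
            · have : x = va := Fin.ext h1
              have : y = va1 := Fin.ext h2
              subst_vars; rfl
            · have : x = va1 := Fin.ext h1
              have : y = va := Fin.ext h2
              subst_vars; exact Sym2.eq_swap
          rw [hee]; exact mem_insert_self _ _
  have hcard : H.edgeFinset.card ≤ 2 * a + 1 := by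
    calc H.edgeFinset.card ≤ (insert s(va, va1) (Cfin.biUnion (fun v => H.incidenceFinset v))).card :=
          card_le_card hsub
      _ ≤ (Cfin.biUnion (fun v => H.incidenceFinset v)).card + 1 := card_insert_le _ _
      _ ≤ (∑ v ∈ Cfin, (H.incidenceFinset v).card) + 1 := by
          gcongr; exact card_biUnion_le
      _ ≤ (∑ v ∈ Cfin, 2) + 1 := by
          gcongr with v hv
          rw [card_incidenceFinset_eq_degree]
          exact hdeg' v
      _ = 2 * Cfin.card + 1 := by rw [Finset.sum_const]; ring
      _ ≤ 2 * a + 1 := by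
          gcongr
          rw [hC, card_filter_lt_fin n a (by omega)]
  rw [Set.ncard_eq_toFinset_card']
  exact hcard


/-- For even `k ≥ 2` and `n ≥ k/2 + 1`, the join `K_{k/2-1} ∨ (K_2 ∪ E_{n-k/2-1})` contains
no linear forest with `k` edges, and its number of `s`-cliques (`s ≥ 1`) equals
`C(k/2+1, s) + (n-k/2-1)·C(k/2-1, s-1)`. -/
theorem stmt8 (n k s : ℕ) (hk : Even k) (hk2 : 2 ≤ k) (hn : k / 2 + 1 ≤ n) (hs : 1 ≤ s) :
    ¬ containsLinearForest (joinGraphK2 n (k / 2 - 1)) k ∧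
    cliqueCount (joinGraphK2 n (k / 2 - 1)) s =
      Nat.choose (k / 2 + 1) s + (n - k / 2 - 1) * Nat.choose (k / 2 - 1) (s - 1) := by
  have hdvd : k / 2 * 2 = k := Nat.div_mul_cancel hk.two_dvd
  set a := k / 2 - 1 with ha
  have ha2 : a + 2 ≤ n := by omega
  constructor
  · rintro ⟨H, hHle, -, hdeg, hcard⟩
    have := edge_bound n a ha2 H hHle hdeg
    rw [hcard] at this
    omega
  · rw [clique_count_eq n a s ha2 hs]
    have h1 : a + 2 = k / 2 + 1 := by omega
    have h2 : n - a - 2 = n - k / 2 - 1 := by omega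
    rw [h1, h2]
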